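/- Sum capacity of the pinching-antenna multiple access channel (Theorem 1): Assume for every user k that G_k := sup_{v̄ ∈ V} |γ(v̄; w_k)|² is attained and G_k > 0. Then the supremum of the average sum rate R̄(v,p) over all feasible transmission strategies (v,p) equals log₂(1 + P·(Σ_{k=1}^K G_k)/(N σ²)). -/

import Mathlib

open MeasureTheory

noncomputable section

/-- Euclidean distance between two points of ℝ³ (represented as `ℝ × ℝ × ℝ`). -/
def dist3 (a b : ℝ × ℝ × ℝ) : ℝ :=
  Real.sqrt ((a.1 - b.1) ^ 2 + (a.2.1 - b.2.1) ^ 2 + (a.2.2 - b.2.2) ^ 2)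

/-- Feasible set of antenna x-coordinates: `0 ≤ v 0`, successive gaps at least `Δ`,
and `v (N-1) ≤ Lmax`. -/
def Vfeas (N : ℕ) (Δ Lmax : ℝ) : Set (Fin N → ℝ) :=
  {v | (∀ i : Fin N, (i : ℕ) = 0 → 0 ≤ v i) ∧
       (∀ i j : Fin N, (j : ℕ) = (i : ℕ) + 1 → Δ ≤ v j - v i) ∧
       (∀ i : Fin N, (i : ℕ) = N - 1 → v i ≤ Lmax)}

/-- Effective channel coefficient `γ(v̄; w)` of the pinching-antenna system, with
`η = λ²/(16π²)`, antenna `n` at `(v n, 0, d)` and feed point at `(-Dx/2, 0, d)`. -/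
def gamma (N : ℕ) (lam lamg d Dx : ℝ) (v : Fin N → ℝ) (w : ℝ × ℝ × ℝ) : ℂ :=
  ∑ n : Fin N,
    Complex.exp (-(Complex.I) * ((2 * Real.pi / lamg * dist3 (v n, 0, d) (-Dx / 2, 0, d) : ℝ) : ℂ)) *
      (((Real.sqrt (lam ^ 2 / (16 * Real.pi ^ 2)) : ℝ) : ℂ) *
        Complex.exp (-(Complex.I) * ((2 * Real.pi / lam * dist3 (v n, 0, d) w : ℝ) : ℂ)) /
        ((dist3 (v n, 0, d) w : ℝ) : ℂ))

/-- Channel power gain `|γ(v̄; w)|²`. -/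
def gain (N : ℕ) (lam lamg d Dx : ℝ) (v : Fin N → ℝ) (w : ℝ × ℝ × ℝ) : ℝ :=
  ‖gamma N lam lamg d Dx v w‖ ^ 2

/-- A feasible transmission strategy: measurable antenna trajectory taking values in the
feasible set, measurable nonnegative powers with per-user average power budget `P`. -/
def Feasible (N K : ℕ) (Δ Lmax T P : ℝ)
    (v : ℝ → Fin N → ℝ) (p : ℝ → Fin K → ℝ) : Prop :=
  Measurable v ∧ Measurable p ∧
  (∀ t ∈ Set.Ioc (0 : ℝ) T, v t ∈ Vfeas N Δ Lmax) ∧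
  (∀ t ∈ Set.Ioc (0 : ℝ) T, ∀ k, 0 ≤ p t k) ∧
  (∀ k, ∫⁻ t in Set.Ioc (0 : ℝ) T, ENNReal.ofReal (p t k) ≤ ENNReal.ofReal (T * P))

/-- Average sum rate of a transmission strategy over the period `(0, T]`. -/
def avgRate (N K : ℕ) (lam lamg d Dx σ2 T : ℝ) (w : Fin K → ℝ × ℝ × ℝ)
    (v : ℝ → Fin N → ℝ) (p : ℝ → Fin K → ℝ) : ℝ :=
  (1 / T) * ∫ t in Set.Ioc (0 : ℝ) T,
    Real.logb 2 (1 + (∑ k, p t k * gain N lam lamg d Dx (v t) (w k)) / (N * σ2))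

end

section Aux

open MeasureTheory

lemma measurable_dist3_aux {N : ℕ} (n : Fin N) (d : ℝ) (b : ℝ × ℝ × ℝ) :
    Measurable (fun v : Fin N → ℝ => dist3 (v n, 0, d) b) := by
  unfold dist3
  apply Measurable.sqrt
  dsimp only
  apply Measurable.add
  apply Measurable.add
  · exact (((measurable_pi_apply n).sub measurable_const).pow measurable_const)
  · exact measurable_const
  · exact measurable_const

lemma measurable_gain_aux (N : ℕ) (lam lamg d Dx : ℝ) (w : ℝ × ℝ × ℝ) :
    Measurable (fun v : Fin N → ℝ => gain N lam lamg d Dx v w) := by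
  unfold gain
  apply Measurable.pow _ measurable_const
  apply continuous_norm.measurable.comp
  unfold gamma
  apply Finset.measurable_sum
  intro n _
  apply Measurable.mul
  · exact Complex.measurable_exp.comp
      ((measurable_const.mul ((Complex.measurable_ofReal.comp
        ((measurable_dist3_aux n d _).const_mul _)))))
  · apply Measurable.div
    · apply Measurable.mul measurable_const
      exact Complex.measurable_exp.comp
        ((measurable_const.mul ((Complex.measurable_ofReal.comp
          ((measurable_dist3_aux n d w).const_mul _)))))
    · exact Complex.measurable_ofReal.comp (measurable_dist3_aux n d w)

lemma logb_tangent_aux {c x : ℝ} (hc : 0 < c) (hx : 0 ≤ x) :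
    Real.logb 2 (1 + x) ≤ Real.logb 2 (1 + c) + (x - c) / ((1 + c) * Real.log 2) := by
  have h1 : (0:ℝ) < 1 + x := by linarith
  have h2 : (0:ℝ) < 1 + c := by linarith
  have hl2 : 0 < Real.log 2 := Real.log_pos (by norm_num)
  have key : Real.log (1 + x) ≤ Real.log (1 + c) + (x - c) / (1 + c) := by
    have h := Real.log_le_sub_one_of_pos (div_pos h1 h2)
    rw [Real.log_div h1.ne' h2.ne'] at h
    have heq : (1 + x) / (1 + c) - 1 = (x - c) / (1 + c) := by field_simp; ring
    rw [heq] at h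
    linarith
  rw [Real.logb, Real.logb, ← div_div, ← add_div]
  exact div_le_div_of_nonneg_right key hl2.le

lemma avgRate_le_aux
    (N K : ℕ) (hN : 1 ≤ N) (hK : 1 ≤ K)
    (lam lamg d Dx Δ Lmax T P σ2 : ℝ)
    (hT : 0 < T) (hP : 0 < P) (hσ : 0 < σ2)
    (w : Fin K → ℝ × ℝ × ℝ) (G : Fin K → ℝ)
    (hGatt : ∀ k, IsGreatest
      ((fun vb => gain N lam lamg d Dx vb (w k)) '' Vfeas N Δ Lmax) (G k))
    (hGpos : ∀ k, 0 < G k)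
    (v : ℝ → Fin N → ℝ) (p : ℝ → Fin K → ℝ)
    (hfeas : Feasible N K Δ Lmax T P v p) :
    avgRate N K lam lamg d Dx σ2 T w v p
      ≤ Real.logb 2 (1 + P * (∑ k, G k) / (N * σ2)) := by
  classical
  obtain ⟨hvm, hpm, hvV, hpnn, hbud⟩ := hfeas
  have hKuniv : (Finset.univ : Finset (Fin K)).Nonempty := ⟨⟨0, hK⟩, Finset.mem_univ _⟩
  have hSpos : 0 < ∑ k, G k := Finset.sum_pos (fun k _ => hGpos k) hKuniv
  have hNpos : (0:ℝ) < (N:ℝ) := by exact_mod_cast Nat.lt_of_lt_of_le Nat.zero_lt_one hN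
  have hNσ : (0:ℝ) < (N:ℝ) * σ2 := mul_pos hNpos hσ
  set S : ℝ := ∑ k, G k with hSdef
  set c0 : ℝ := P * S / ((N:ℝ) * σ2) with hc0def
  have hc0pos : 0 < c0 := div_pos (mul_pos hP hSpos) hNσ
  set s : Set ℝ := Set.Ioc (0:ℝ) T with hsdef
  set X : ℝ → ℝ := fun t => ∑ k, p t k * gain N lam lamg d Dx (v t) (w k) with hXdef
  have hpkm : ∀ k, Measurable (fun t => p t k) := fun k => (measurable_pi_apply k).comp hpm
  have hXm : Measurable X := by
    apply Finset.measurable_sum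
    intro k _
    exact (hpkm k).mul ((measurable_gain_aux N lam lamg d Dx (w k)).comp hvm)
  have hgle : ∀ t ∈ s, ∀ k, gain N lam lamg d Dx (v t) (w k) ≤ G k :=
    fun t ht k => (hGatt k).2 ⟨v t, hvV t ht, rfl⟩
  have hgnn : ∀ t k, 0 ≤ gain N lam lamg d Dx (v t) (w k) := fun t k => sq_nonneg _
  have hpae : ∀ k, 0 ≤ᵐ[volume.restrict s] fun t => p t k := by
    intro k
    filter_upwards [ae_restrict_mem measurableSet_Ioc] with t ht
    exact hpnn t ht k
  have hpint : ∀ k, IntegrableOn (fun t => p t k) s := by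
    intro k
    refine ⟨(hpkm k).aestronglyMeasurable, ?_⟩
    rw [hasFiniteIntegral_iff_ofReal (hpae k)]
    exact lt_of_le_of_lt (hbud k) ENNReal.ofReal_lt_top
  have hpIle : ∀ k, ∫ t in s, p t k ≤ T * P := by
    intro k
    rw [integral_eq_lintegral_of_nonneg_ae (hpae k) (hpkm k).aestronglyMeasurable]
    calc (∫⁻ t in s, ENNReal.ofReal (p t k)).toReal
        ≤ (ENNReal.ofReal (T * P)).toReal :=
          ENNReal.toReal_mono ENNReal.ofReal_ne_top (hbud k)
      _ = T * P := ENNReal.toReal_ofReal (by positivity)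
  set Y : ℝ → ℝ := fun t => ∑ k, p t k * G k with hYdef
  have hYint : IntegrableOn Y s :=
    integrable_finset_sum _ (fun k _ => (hpint k).mul_const _)
  have hXY : ∀ t ∈ s, X t ≤ Y t := by
    intro t ht
    apply Finset.sum_le_sum
    intro k _
    exact mul_le_mul_of_nonneg_left (hgle t ht k) (hpnn t ht k)
  have hXnn : ∀ t ∈ s, 0 ≤ X t := by
    intro t ht
    apply Finset.sum_nonneg
    intro k _
    exact mul_nonneg (hpnn t ht k) (hgnn t k)
  have hXint : IntegrableOn X s := by
    apply hYint.mono' hXm.aestronglyMeasurable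
    filter_upwards [ae_restrict_mem measurableSet_Ioc] with t ht
    rw [Real.norm_eq_abs, abs_of_nonneg (hXnn t ht)]
    exact hXY t ht
  have hsvol : (volume s).toReal = T := by
    rw [hsdef, Real.volume_Ioc, sub_zero, ENNReal.toReal_ofReal hT.le]
  have hsfin : volume s < ⊤ := by
    rw [hsdef, Real.volume_Ioc]; exact ENNReal.ofReal_lt_top
  have hIX : ∫ t in s, X t ≤ T * P * S := by
    have h1 : ∫ t in s, X t ≤ ∫ t in s, Y t := by
      apply integral_mono_ae hXint hYint
      filter_upwards [ae_restrict_mem measurableSet_Ioc] with t ht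
      exact hXY t ht
    have h2 : ∫ t in s, Y t = ∑ k, (∫ t in s, p t k) * G k := by
      rw [hYdef]
      rw [integral_finset_sum _ (fun k _ => (hpint k).mul_const _)]
      exact Finset.sum_congr rfl (fun k _ => integral_mul_const _ _)
    have h3 : ∑ k, (∫ t in s, p t k) * G k ≤ ∑ k, (T * P) * G k := by
      apply Finset.sum_le_sum
      intro k _
      exact mul_le_mul_of_nonneg_right (hpIle k) (hGpos k).le
    have h4 : ∑ k, (T * P) * G k = T * P * S := by
      rw [hSdef, ← Finset.mul_sum]
    linarith [h2 ▸ h1, h4 ▸ h3]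
  set D : ℝ := (1 + c0) * Real.log 2 with hDdef
  have hl2 : 0 < Real.log 2 := Real.log_pos (by norm_num)
  have hDpos : 0 < D := mul_pos (by linarith) hl2
  set f : ℝ → ℝ := fun t => Real.logb 2 (1 + X t / ((N:ℝ) * σ2)) with hfdef
  set g : ℝ → ℝ := fun t => Real.logb 2 (1 + c0) + (X t / ((N:ℝ) * σ2) - c0) / D
    with hgdef
  have hfm : Measurable f := by
    have : f = fun t => Real.log (1 + X t / ((N:ℝ) * σ2)) / Real.log 2 := rfl
    rw [this]
    exact (Real.measurable_log.comp (measurable_const.add (hXm.div_const _))).div_const _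
  have hfg : ∀ t ∈ s, f t ≤ g t := by
    intro t ht
    exact logb_tangent_aux hc0pos (div_nonneg (hXnn t ht) hNσ.le)
  have hfnn : ∀ t ∈ s, 0 ≤ f t := by
    intro t ht
    apply Real.logb_nonneg one_lt_two
    have := div_nonneg (hXnn t ht) hNσ.le
    linarith
  have hconst_int : ∀ c : ℝ, IntegrableOn (fun _ : ℝ => c) s :=
    fun c => integrableOn_const hsfin.ne
  have hg2int : IntegrableOn (fun t => (X t / ((N:ℝ) * σ2) - c0) / D) s :=
    (((hXint.div_const _).sub (hconst_int c0)).div_const _)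
  have hgint : IntegrableOn g s := by
    rw [hgdef]
    exact (hconst_int _).add hg2int
  have hfint : IntegrableOn f s := by
    apply hgint.mono' hfm.aestronglyMeasurable
    filter_upwards [ae_restrict_mem measurableSet_Ioc] with t ht
    rw [Real.norm_eq_abs, abs_of_nonneg (hfnn t ht)]
    exact hfg t ht
  have hIf : ∫ t in s, f t ≤ ∫ t in s, g t := by
    apply integral_mono_ae hfint hgint
    filter_upwards [ae_restrict_mem measurableSet_Ioc] with t ht
    exact hfg t ht
  have hIg : ∫ t in s, g t ≤ T * Real.logb 2 (1 + c0) := by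
    have heq : ∫ t in s, g t
        = T * Real.logb 2 (1 + c0) + ((∫ t in s, X t) / ((N:ℝ) * σ2) - T * c0) / D := by
      rw [hgdef, integral_add (hconst_int _) hg2int, setIntegral_const, measureReal_def, hsvol, smul_eq_mul]
      congr 1
      rw [integral_div, integral_sub (hXint.div_const _) (hconst_int c0),
        integral_div, setIntegral_const, measureReal_def, hsvol, smul_eq_mul]
    rw [heq]
    have hnum : (∫ t in s, X t) / ((N:ℝ) * σ2) - T * c0 ≤ 0 := by
      have : T * c0 = T * P * S / ((N:ℝ) * σ2) := by
        rw [hc0def]; ring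
      rw [this]
      have := div_le_div_of_nonneg_right hIX hNσ.le
      linarith
    have : ((∫ t in s, X t) / ((N:ℝ) * σ2) - T * c0) / D ≤ 0 :=
      div_nonpos_of_nonpos_of_nonneg hnum hDpos.le
    linarith
  have hfinal : ∫ t in s, f t ≤ T * Real.logb 2 (1 + c0) := hIf.trans hIg
  unfold avgRate
  have hshow : (1 / T) * ∫ t in Set.Ioc (0:ℝ) T,
      Real.logb 2 (1 + (∑ k, p t k * gain N lam lamg d Dx (v t) (w k)) / ((N:ℝ) * σ2))
      = (1 / T) * ∫ t in s, f t := rfl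
  rw [hshow]
  have h1T : (0:ℝ) < 1 / T := by positivity
  calc (1 / T) * ∫ t in s, f t
      ≤ (1 / T) * (T * Real.logb 2 (1 + c0)) :=
        mul_le_mul_of_nonneg_left hfinal h1T.le
    _ = Real.logb 2 (1 + c0) := by field_simp
    _ = Real.logb 2 (1 + P * (∑ k, G k) / ((N:ℝ) * σ2)) := by rw [hc0def, hSdef]

lemma achieve_aux
    (N K : ℕ) (hN : 1 ≤ N) (hK : 1 ≤ K)
    (lam lamg d Dx Δ Lmax T P σ2 : ℝ)
    (hT : 0 < T) (hP : 0 < P) (hσ : 0 < σ2)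
    (w : Fin K → ℝ × ℝ × ℝ) (G : Fin K → ℝ)
    (hGatt : ∀ k, IsGreatest
      ((fun vb => gain N lam lamg d Dx vb (w k)) '' Vfeas N Δ Lmax) (G k))
    (hGpos : ∀ k, 0 < G k) :
    ∃ v p, Feasible N K Δ Lmax T P v p ∧
      avgRate N K lam lamg d Dx σ2 T w v p
        = Real.logb 2 (1 + P * (∑ k, G k) / (N * σ2)) := by
  classical
  have hKuniv : (Finset.univ : Finset (Fin K)).Nonempty := ⟨⟨0, hK⟩, Finset.mem_univ _⟩
  set S : ℝ := ∑ k, G k with hSdef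
  have hSpos : 0 < S := Finset.sum_pos (fun k _ => hGpos k) hKuniv
  have hch : ∀ k, ∃ vb, vb ∈ Vfeas N Δ Lmax ∧ gain N lam lamg d Dx vb (w k) = G k := by
    intro k
    rcases (hGatt k).1 with ⟨vb, hvb, hg⟩
    exact ⟨vb, hvb, hg⟩
  choose vstar hvstarV hvstarG using hch
  -- cumulative switching times
  set Gext : ℕ → ℝ := fun j => if h : j < K then G ⟨j, h⟩ else 0 with hGextdef
  have hGextnn : ∀ j, 0 ≤ Gext j := by
    intro j
    rw [hGextdef]
    dsimp only
    split
    · exact (hGpos _).le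
    · exact le_refl 0
  set c : ℕ → ℝ := fun m => (T / S) * ∑ j ∈ Finset.range m, Gext j with hcdef
  have hcmono : Monotone c := by
    intro a b hab
    apply mul_le_mul_of_nonneg_left _ (by positivity)
    exact Finset.sum_le_sum_of_subset_of_nonneg (Finset.range_subset_range.mpr hab)
      (fun j _ _ => hGextnn j)
  have hc0 : c 0 = 0 := by simp [hcdef]
  have hcK : c K = T := by
    have hsum : ∑ j ∈ Finset.range K, Gext j = S := by
      rw [hSdef, ← Fin.sum_univ_eq_sum_range]
      apply Finset.sum_congr rfl
      intro i _
      rw [hGextdef]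
      simp [i.isLt]
    rw [hcdef]
    dsimp only
    rw [hsum]
    field_simp
  have hlen : ∀ k : Fin K, c ((k : ℕ) + 1) - c (k : ℕ) = (T / S) * G k := by
    intro k
    have hGk : Gext (k : ℕ) = G k := by
      rw [hGextdef]; simp [k.isLt]
    rw [hcdef]
    dsimp only
    rw [Finset.sum_range_succ, mul_add, hGk]
    ring
  have hIsub : ∀ k : Fin K, Set.Ioc (c (k : ℕ)) (c ((k : ℕ) + 1)) ⊆ Set.Ioc (0 : ℝ) T := by
    intro k
    have h1 : c 0 ≤ c (k : ℕ) := hcmono (Nat.zero_le _)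
    have h2 : c ((k : ℕ) + 1) ≤ c K := hcmono k.isLt
    rw [hc0] at h1
    rw [hcK] at h2
    exact Set.Ioc_subset_Ioc h1 h2
  have hdisj : ∀ t, ∀ j k : Fin K, t ∈ Set.Ioc (c (j : ℕ)) (c ((j : ℕ) + 1)) →
      t ∈ Set.Ioc (c (k : ℕ)) (c ((k : ℕ) + 1)) → j = k := by
    intro t j k hj hk
    rcases lt_trichotomy (j : ℕ) (k : ℕ) with h | h | h
    · exfalso
      have : c ((j : ℕ) + 1) ≤ c (k : ℕ) := hcmono h
      have h1 := hj.2
      have h2 := hk.1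
      linarith
    · exact Fin.ext h
    · exfalso
      have : c ((k : ℕ) + 1) ≤ c (j : ℕ) := hcmono h
      have h1 := hk.2
      have h2 := hj.1
      linarith
  have hcover : ∀ t ∈ Set.Ioc (0 : ℝ) T, ∃ k : Fin K,
      t ∈ Set.Ioc (c (k : ℕ)) (c ((k : ℕ) + 1)) := by
    intro t ht
    set Pm : ℕ → Prop := fun m => c m < t with hPmdef
    have hP0 : Pm 0 := by rw [hPmdef]; dsimp only; rw [hc0]; exact ht.1
    set k := Nat.findGreatest Pm (K - 1) with hkdef
    have hkle : k ≤ K - 1 := Nat.findGreatest_le _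
    have hklt : k < K := by omega
    have hck : c k < t := Nat.findGreatest_spec (Nat.zero_le _) hP0
    have hck1 : t ≤ c (k + 1) := by
      by_cases hk' : k + 1 ≤ K - 1
      · have hng : ¬ Pm (k + 1) := Nat.findGreatest_is_greatest (Nat.lt_succ_self k) hk'
        exact not_lt.mp hng
      · have hKk : K ≤ k + 1 := by omega
        calc t ≤ T := ht.2
          _ = c K := hcK.symm
          _ ≤ c (k + 1) := hcmono hKk
    exact ⟨⟨k, hklt⟩, hck, hck1⟩
  -- the strategy
  set p : ℝ → Fin K → ℝ := fun t k =>
    Set.indicator (Set.Ioc (c (k : ℕ)) (c ((k : ℕ) + 1))) (fun _ => P * S / G k) t with hpdef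
  set v : ℝ → Fin N → ℝ := fun t n =>
    ∑ k : Fin K, Set.indicator (Set.Ioc (c (k : ℕ)) (c ((k : ℕ) + 1)))
      (fun _ => vstar k n) t with hvdef
  have hveq : ∀ t, ∀ k : Fin K, t ∈ Set.Ioc (c (k : ℕ)) (c ((k : ℕ) + 1)) →
      v t = vstar k := by
    intro t k hk
    funext n
    show (∑ j : Fin K, Set.indicator (Set.Ioc (c (j : ℕ)) (c ((j : ℕ) + 1)))
      (fun _ => vstar j n) t) = vstar k n
    rw [Finset.sum_eq_single k]
    · exact Set.indicator_of_mem hk _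
    · intro j _ hjk
      apply Set.indicator_of_notMem
      intro hmem
      exact hjk (hdisj t j k hmem hk)
    · intro h
      exact absurd (Finset.mem_univ k) h
  have hpeq : ∀ t, ∀ k : Fin K, t ∈ Set.Ioc (c (k : ℕ)) (c ((k : ℕ) + 1)) →
      ∀ j, p t j = if j = k then P * S / G k else 0 := by
    intro t k hk j
    show Set.indicator (Set.Ioc (c (j : ℕ)) (c ((j : ℕ) + 1))) (fun _ => P * S / G j) t
      = if j = k then P * S / G k else 0
    by_cases hjk : j = k
    · subst hjk
      rw [if_pos rfl]
      exact Set.indicator_of_mem hk _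
    · rw [if_neg hjk]
      apply Set.indicator_of_notMem
      intro hmem
      exact hjk (hdisj t j k hmem hk)
  refine ⟨v, p, ⟨?_, ?_, ?_, ?_, ?_⟩, ?_⟩
  · -- Measurable v
    apply measurable_pi_lambda
    intro n
    apply Finset.measurable_sum
    intro k _
    exact Measurable.indicator measurable_const measurableSet_Ioc
  · -- Measurable p
    apply measurable_pi_lambda
    intro k
    exact Measurable.indicator measurable_const measurableSet_Ioc
  · -- membership
    intro t ht
    obtain ⟨k, hk⟩ := hcover t ht
    rw [hveq t k hk]
    exact hvstarV k
  · -- nonneg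
    intro t _ k
    apply Set.indicator_nonneg
    intro a _
    exact div_nonneg (mul_nonneg hP.le hSpos.le) (hGpos k).le
  · -- power budget
    intro k
    have hsub := hIsub k
    have heq : (fun t => ENNReal.ofReal (p t k))
        = fun t => Set.indicator (Set.Ioc (c (k : ℕ)) (c ((k : ℕ) + 1)))
            (fun _ => ENNReal.ofReal (P * S / G k)) t := by
      funext t
      rw [hpdef]
      dsimp only
      rw [Set.indicator_apply, Set.indicator_apply]
      split <;> simp
    rw [heq, lintegral_indicator measurableSet_Ioc, setLIntegral_const,
      Measure.restrict_apply measurableSet_Ioc, Set.inter_eq_left.mpr hsub,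
      Real.volume_Ioc, hlen k, ← ENNReal.ofReal_mul (div_nonneg (mul_nonneg hP.le hSpos.le) (hGpos k).le)]
    apply ENNReal.ofReal_le_ofReal
    apply le_of_eq
    have hGk := (hGpos k).ne'
    field_simp
  · -- the rate
    have hval : ∀ t ∈ Set.Ioc (0 : ℝ) T,
        (∑ j, p t j * gain N lam lamg d Dx (v t) (w j)) = P * S := by
      intro t ht
      obtain ⟨k, hk⟩ := hcover t ht
      rw [hveq t k hk, Finset.sum_eq_single k]
      · rw [hpeq t k hk k, if_pos rfl, hvstarG k, div_mul_eq_mul_div,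
          mul_div_assoc, div_self (hGpos k).ne', mul_one]
      · intro j _ hjk
        rw [hpeq t k hk j, if_neg hjk, zero_mul]
      · intro h
        exact absurd (Finset.mem_univ k) h
    unfold avgRate
    rw [setIntegral_congr_fun measurableSet_Ioc
      (fun t ht => by dsimp only; rw [hval t ht] :
        Set.EqOn (fun t => Real.logb 2
            (1 + (∑ j, p t j * gain N lam lamg d Dx (v t) (w j)) / ((N : ℝ) * σ2)))
          (fun _ => Real.logb 2 (1 + P * S / ((N : ℝ) * σ2))) (Set.Ioc 0 T))]
    rw [setIntegral_const, measureReal_def, Real.volume_Ioc, sub_zero, ENNReal.toReal_ofReal hT.le,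
      smul_eq_mul]
    field_simp

end Aux


/-- Theorem 1: sum capacity of the pinching-antenna MAC.
If for every user `k` the maximum channel power gain `G k` is attained on the feasible
set `V` and is positive, then the supremum of the average sum rate over all feasible
transmission strategies equals `log₂(1 + P (∑ k, G k) / (N σ²))`. -/
theorem sum_capacity_pinching_MAC
    (N K : ℕ) (hN : 1 ≤ N) (hK : 1 ≤ K)
    (lam lamg d Dx Δ Lmax T P σ2 : ℝ)
    (hlam : 0 < lam) (hlamg : 0 < lamg) (hd : 0 < d) (hΔ : 0 < Δ)
    (hLmax : 0 < Lmax) (hNL : ((N : ℝ) - 1) * Δ ≤ Lmax)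
    (hT : 0 < T) (hP : 0 < P) (hσ : 0 < σ2)
    (w : Fin K → ℝ × ℝ × ℝ) (hw : ∀ k, (w k).2.2 = 0)
    (G : Fin K → ℝ)
    (hGatt : ∀ k, IsGreatest
      ((fun vb => gain N lam lamg d Dx vb (w k)) '' Vfeas N Δ Lmax) (G k))
    (hGpos : ∀ k, 0 < G k) :
    sSup {r : ℝ | ∃ v p, Feasible N K Δ Lmax T P v p ∧
        r = avgRate N K lam lamg d Dx σ2 T w v p}
      = Real.logb 2 (1 + P * (∑ k, G k) / (N * σ2)) := by
  apply IsGreatest.csSup_eq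
  constructor
  · obtain ⟨v, p, hfeas, heq⟩ :=
      achieve_aux N K hN hK lam lamg d Dx Δ Lmax T P σ2 hT hP hσ w G hGatt hGpos
    exact ⟨v, p, hfeas, heq.symm⟩
  · rintro r ⟨v, p, hfeas, rfl⟩
    exact avgRate_le_aux N K hN hK lam lamg d Dx Δ Lmax T P σ2 hT hP hσ w G hGatt hGpos
      v p hfeas
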